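/- arXiv:1805.03789 — 4 statements merged into one kernel-verified Lean document; each statement's English description precedes it below -/
import Mathlib

section
/- Product rule for evaluation of skew polynomials: let σ be a field automorphism of F_{q^m}, U, V ∈ F_{q^m}[x;σ], and a ∈ F_{q^m}. Let c = V(a) (the remainder evaluation, where F(a) is defined by F = G(x−a) + F(a)). If c = 0 then (UV)(a) = 0; if c ≠ 0 then (UV)(a) = U(σ(c) c^{−1} a) · V(a). -/
open Finset

/-- The `i`-th truncated norm `N_i(a) = σ^{i−1}(a)⋯σ(a)·a`. -/
def skewNorm {K : Type*} [Field K] (σ : K ≃+* K) (i : ℕ) (a : K) : K :=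
  ∏ j ∈ Finset.range i, (σ ^ j) a

/-- Evaluation of a skew polynomial `F ∈ K[x;σ]` (encoded by its coefficients
`F : ℕ →₀ K`) at `a`: the remainder of right division of `F` by `x − a`, given by
the closed formula `F(a) = Σᵢ Fᵢ · N_i(a)`. -/
noncomputable def skewEval {K : Type*} [Field K] (σ : K ≃+* K) (F : ℕ →₀ K) (a : K) : K :=
  F.sum fun i c => c * skewNorm σ i a

/-- Multiplication in the skew polynomial ring `K[x;σ]`, where `x·a = σ(a)·x`. -/
noncomputable def skewMul {K : Type*} [Field K] (σ : K ≃+* K) (U V : ℕ →₀ K) : ℕ →₀ K :=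
  U.sum fun i a => V.sum fun j b => Finsupp.single (i + j) (a * (σ ^ i) b)

lemma skewNorm_add {K : Type*} [Field K] (σ : K ≃+* K) (i j : ℕ) (a : K) :
    skewNorm σ (i + j) a = (σ ^ i) (skewNorm σ j a) * skewNorm σ i a := by
  unfold skewNorm
  rw [Finset.prod_range_add, map_prod, mul_comm]
  congr 1
  refine Finset.prod_congr rfl fun k _ => ?_
  rw [pow_add]; rfl

lemma skewNorm_succ {K : Type*} [Field K] (σ : K ≃+* K) (n : ℕ) (a : K) :
    skewNorm σ (n + 1) a = skewNorm σ n a * (σ ^ n) a :=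
  Finset.prod_range_succ _ _

lemma skewNorm_conj {K : Type*} [Field K] (σ : K ≃+* K) (i : ℕ) (a c : K) (hc : c ≠ 0) :
    (σ ^ i) c * skewNorm σ i a = skewNorm σ i (σ c * c⁻¹ * a) * c := by
  induction i with
  | zero => simp [skewNorm]
  | succ n ih =>
    have hσc : (σ ^ n) c ≠ 0 := by
      simp only [ne_eq, EmbeddingLike.map_eq_zero_iff]; exact hc
    have hinv : ((σ ^ n) c)⁻¹ * (σ ^ n) c = 1 := inv_mul_cancel₀ hσc
    have h1 : ((σ ^ (n+1)) c) = (σ ^ n) (σ c) := by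
      rw [pow_succ]; rfl
    have h2 : (σ ^ n) (σ c * c⁻¹ * a) = (σ ^ n) (σ c) * ((σ ^ n) c)⁻¹ * (σ ^ n) a := by
      rw [map_mul, map_mul, map_inv₀]
    rw [skewNorm_succ, skewNorm_succ, h1, h2]
    linear_combination ((σ ^ n) (σ c) * ((σ ^ n) c)⁻¹ * (σ ^ n) a) * ih -
      ((σ ^ n) (σ c) * skewNorm σ n a * (σ ^ n) a) * hinv

lemma skewEval_key {K : Type*} [Field K] (σ : K ≃+* K) (U V : ℕ →₀ K) (a : K) :
    skewEval σ (skewMul σ U V) a =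
      U.sum fun i u => u * (σ ^ i) (skewEval σ V a) * skewNorm σ i a := by
  unfold skewEval skewMul
  rw [Finsupp.sum_sum_index (by simp) (by intros; ring)]
  refine Finsupp.sum_congr fun i _ => ?_
  rw [Finsupp.sum_sum_index (by simp) (by intros; ring)]
  rw [map_finsuppSum, Finsupp.mul_sum, Finsupp.sum_mul]
  refine Finsupp.sum_congr fun j _ => ?_
  rw [Finsupp.sum_single_index (by simp), skewNorm_add, map_mul]
  ring

/-- Product rule for skew polynomial evaluation: if `c = V(a) = 0` then `(UV)(a) = 0`,
and if `c ≠ 0` then `(UV)(a) = U(σ(c)c⁻¹a) · V(a)`. -/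
theorem skewEval_mul {K : Type*} [Field K] (σ : K ≃+* K) (U V : ℕ →₀ K) (a : K) :
    (skewEval σ V a = 0 → skewEval σ (skewMul σ U V) a = 0) ∧
    (skewEval σ V a ≠ 0 → skewEval σ (skewMul σ U V) a =
      skewEval σ U (σ (skewEval σ V a) * (skewEval σ V a)⁻¹ * a) * skewEval σ V a) := by
  constructor
  · intro h
    rw [skewEval_key, h]
    simp [Finsupp.sum]
  · intro h
    rw [skewEval_key]
    set c := skewEval σ V a with hc
    calc U.sum (fun i u => u * (σ ^ i) c * skewNorm σ i a)
        = U.sum (fun i u => (u * skewNorm σ i (σ c * c⁻¹ * a)) * c) := by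
          refine Finsupp.sum_congr fun i _ => ?_
          rw [mul_assoc, skewNorm_conj σ i a c h]; ring
      _ = skewEval σ U (σ c * c⁻¹ * a) * c := by rw [← Finsupp.sum_mul]; rfl
end

section
/- Let γ be a primitive element of F_{q^m} and σ(a) = a^{q^r} with gcd(r,m) = 1. Then for all c ∈ F_{q^m}^* and all 0 ≤ i < j ≤ q−2, γ^j ≠ σ(c)c^{−1}γ^i; that is, γ^0, γ^1, ..., γ^{q−2} lie in pairwise distinct conjugacy classes under the relation b ~ a iff b = σ(c)c^{−1}a for some c ≠ 0. -/
/-- Let `K = F_{q^m}` with `q = p^k` a prime power, `γ` a primitive element of `K`,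
and `σ(a) = a^{q^r}` with `gcd(r,m) = 1`. Then for all `c ≠ 0` and `0 ≤ i < j ≤ q−2`,
`γ^j ≠ σ(c)·c⁻¹·γ^i`; i.e. `γ⁰, γ¹, …, γ^{q−2}` lie in pairwise distinct conjugacy
classes for the relation `b ∼ a ↔ ∃ c ≠ 0, b = σ(c)c⁻¹a`. -/
theorem primitive_powers_distinct_conjugacy_classes
    {K : Type*} [Field K] [Fintype K] (p k q m r : ℕ)
    (hp : p.Prime) (hk : 1 ≤ k) (hq : q = p ^ k) (hm : 1 ≤ m)
    (hr1 : 1 ≤ r) (hrm : r ≤ m) (hgcd : Nat.gcd r m = 1)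
    (hcard : Fintype.card K = q ^ m)
    (γ : K) (hγ : orderOf γ = q ^ m - 1) :
    ∀ c : K, c ≠ 0 → ∀ i j : ℕ, i < j → j ≤ q - 2 →
      γ ^ j ≠ c ^ q ^ r * c⁻¹ * γ ^ i := by
  classical
  intro c hc i j hij hj hEq
  have hq2 : 2 ≤ q := by
    subst hq
    calc 2 ≤ p := hp.two_le
    _ ≤ p ^ k := Nat.le_self_pow (by omega) p
  have hqm1 : 1 ≤ q ^ m := Nat.one_le_pow _ _ (by omega)
  have hqm2 : 2 ≤ q ^ m := by
    calc 2 ≤ q := hq2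
    _ = q ^ 1 := (pow_one q).symm
    _ ≤ q ^ m := Nat.pow_le_pow_right (by omega) hm
  have hγ0 : γ ≠ 0 := by
    intro h
    have h1 : γ ^ (q ^ m - 1) = 1 := by rw [← hγ]; exact pow_orderOf_eq_one γ
    rw [h, zero_pow (by omega)] at h1
    exact zero_ne_one h1
  set u : Kˣ := Units.mk0 γ hγ0 with hu
  set uc : Kˣ := Units.mk0 c hc with huc
  have hou : orderOf u = q ^ m - 1 := by
    rw [← hγ, ← orderOf_units]; rfl
  have htop : Subgroup.zpowers u = ⊤ := by
    apply Subgroup.eq_top_of_card_eq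
    rw [Nat.card_zpowers, hou, Nat.card_eq_fintype_card, Fintype.card_units, hcard]
  obtain ⟨t, ht⟩ : ∃ t : ℤ, u ^ t = uc := by
    have : uc ∈ Subgroup.zpowers u := htop ▸ Subgroup.mem_top uc
    exact Subgroup.mem_zpowers_iff.mp this
  have key : u ^ (j : ℤ) = u ^ (t * (q : ℤ) ^ r - t + i) := by
    have h2 : u ^ (t * (q : ℤ) ^ r - t + i) = uc ^ ((q : ℤ) ^ r) * uc⁻¹ * u ^ (i : ℤ) := by
      rw [← ht]; group
    have e1 : ((q : ℤ) ^ r) = ((q ^ r : ℕ) : ℤ) := by push_cast; ring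
    apply Units.ext
    rw [h2, e1, zpow_natCast, zpow_natCast, zpow_natCast]
    simp [hu, huc, hEq]
  have hdvd : ((q : ℤ) ^ m - 1) ∣ ((j : ℤ) - (t * (q : ℤ) ^ r - t + i)) := by
    have h1 := (zpow_eq_zpow_iff_modEq.mp key)
    rw [hou] at h1
    have hcast : ((q ^ m - 1 : ℕ) : ℤ) = (q : ℤ) ^ m - 1 := by
      push_cast [Nat.cast_sub hqm1]; ring
    have h2 := h1.dvd
    rw [hcast] at h2
    exact (dvd_sub_comm).mp h2
  have hd1 : ((q : ℤ) - 1) ∣ ((q : ℤ) ^ m - 1) := by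
    simpa using sub_dvd_pow_sub_pow (q : ℤ) 1 m
  have hd2 : ((q : ℤ) - 1) ∣ ((q : ℤ) ^ r - 1) := by
    simpa using sub_dvd_pow_sub_pow (q : ℤ) 1 r
  have hd3 : ((q : ℤ) - 1) ∣ ((j : ℤ) - i) := by
    have h4 : ((q : ℤ) - 1) ∣ ((j : ℤ) - (t * (q : ℤ) ^ r - t + i)) := hd1.trans hdvd
    have h5 : ((q : ℤ) - 1) ∣ t * ((q : ℤ) ^ r - 1) := hd2.mul_left t
    have h9 : (j : ℤ) - i = ((j : ℤ) - (t * (q : ℤ) ^ r - t + i)) + t * ((q : ℤ) ^ r - 1) := by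
      ring
    rw [h9]
    exact dvd_add h4 h5
  have h8 : (i : ℤ) < j := by exact_mod_cast hij
  have hle : (q : ℤ) - 1 ≤ (j : ℤ) - i :=
    Int.le_of_dvd (by omega) hd3
  have h6 : (j : ℤ) + 2 ≤ (q : ℤ) := by exact_mod_cast (by omega : j + 2 ≤ q)
  have h7 : (0 : ℤ) ≤ i := Int.natCast_nonneg i
  omega
end

section
/- For a P-closed set Ω ⊆ F_{q^m} with rank n (degree of its minimal skew polynomial), and any P-basis B of Ω, the evaluation map E_B : F_{q^m}[x;σ]_n → F_{q^m}^B, restricting skew polynomials of degree < n to their evaluations on B, is a vector space isomorphism over F_{q^m}. -/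
open Finset

/-- Degree of a skew polynomial encoded as `ℕ →₀ K` (with `deg 0 = 0` by convention). -/
def skewDeg {K : Type*} [Field K] (F : ℕ →₀ K) : ℕ := F.support.sup id

/-- `F` is the (monic) minimal skew polynomial of the set `Ω`: it is nonzero, monic,
vanishes on `Ω`, and has minimal degree among nonzero skew polynomials vanishing on `Ω`. -/
def IsMinSkewPoly {K : Type*} [Field K] (σ : K ≃+* K) (Ω : Set K) (F : ℕ →₀ K) : Prop :=
  F ≠ 0 ∧ F (skewDeg F) = 1 ∧ (∀ b ∈ Ω, skewEval σ F b = 0) ∧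
    ∀ G : ℕ →₀ K, G ≠ 0 → (∀ b ∈ Ω, skewEval σ G b = 0) → skewDeg F ≤ skewDeg G

/-- `a` is P-independent from the set `T`: some skew polynomial vanishing on `T` does not
vanish at `a` (equivalently, `a` is not in the P-closure of `T`). -/
def PIndepFrom {K : Type*} [Field K] (σ : K ≃+* K) (a : K) (T : Set K) : Prop :=
  ∃ F : ℕ →₀ K, (∀ b ∈ T, skewEval σ F b = 0) ∧ skewEval σ F a ≠ 0

/-- A set is P-independent if each of its elements is P-independent from the rest. -/
def PIndep {K : Type*} [Field K] (σ : K ≃+* K) (S : Set K) : Prop :=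
  ∀ a ∈ S, PIndepFrom σ a (S \ {a})


noncomputable def skewEvalLM {K : Type*} [Field K] (σ : K ≃+* K) (a : K) :
    (ℕ →₀ K) →ₗ[K] K :=
  Finsupp.linearCombination K (fun i => skewNorm σ i a)

lemma skewEvalLM_apply {K : Type*} [Field K] (σ : K ≃+* K) (a : K) (F : ℕ →₀ K) :
    skewEvalLM σ a F = skewEval σ F a := by
  simp [skewEvalLM, Finsupp.linearCombination_apply, skewEval, smul_eq_mul]


noncomputable def evalPi {K : Type*} [Field K] (σ : K ≃+* K) {n : ℕ} (B : Fin n → K) :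
    ↥(Finsupp.supported K K (↑(Finset.range n) : Set ℕ)) →ₗ[K] (Fin n → K) :=
  LinearMap.pi fun i => (skewEvalLM σ (B i)).comp (Submodule.subtype _)

lemma evalPi_apply {K : Type*} [Field K] (σ : K ≃+* K) {n : ℕ} (B : Fin n → K)
    (F : ↥(Finsupp.supported K K (↑(Finset.range n) : Set ℕ))) (i : Fin n) :
    evalPi σ B F i = skewEval σ (F : ℕ →₀ K) (B i) := skewEvalLM_apply ..

/-- Lagrange interpolation: for a P-closed set `Ω` of rank `n` (the degree of its minimal
skew polynomial `F_Ω`) and a P-basis `B = {b₁,…,b_n}` of `Ω`, the evaluation map from skew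
polynomials of degree `< n` to `K^B`, `F ↦ (F(b₁),…,F(b_n))`, is a vector space
isomorphism over `K = F_{q^m}`. -/
theorem skew_lagrange_interpolation {K : Type*} [Field K] [Fintype K] (σ : K ≃+* K)
    (Ω : Set K) (FΩ : ℕ →₀ K) (hFΩ : IsMinSkewPoly σ Ω FΩ)
    (hclosed : Ω = {a | skewEval σ FΩ a = 0}) (n : ℕ) (hn : skewDeg FΩ = n)
    (B : Fin n → K) (hBinj : Function.Injective B) (hBmem : ∀ i, B i ∈ Ω)
    (hBindep : PIndep σ (Set.range B))
    (FB : ℕ →₀ K) (hFB : IsMinSkewPoly σ (Set.range B) FB)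
    (hBgen : {a | skewEval σ FB a = 0} = Ω) :
    ∃ e : ↥(Finsupp.supported K K (↑(Finset.range n) : Set ℕ)) ≃ₗ[K] (Fin n → K),
      ∀ F : ↥(Finsupp.supported K K (↑(Finset.range n) : Set ℕ)), ∀ i : Fin n,
        e F i = skewEval σ (↑F : ℕ →₀ K) (B i) := by
  classical
  set s : Set ℕ := (↑(Finset.range n) : Set ℕ) with hs
  set L := evalPi σ B with hLdef
  have hL : ∀ F i, L F i = skewEval σ (F : ℕ →₀ K) (B i) := evalPi_apply σ B
  -- injectivity
  have hinj : Function.Injective L := by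
    rw [← LinearMap.ker_eq_bot (M := ↥(Finsupp.supported K K s)) (M₂ := Fin n → K), LinearMap.ker_eq_bot']
    intro F hF
    by_contra hne
    have hne' : (F : ℕ →₀ K) ≠ 0 := by
      intro h
      exact hne (Subtype.ext h)
    have hsupp : ∀ k ∈ (F : ℕ →₀ K).support, k < n := by
      intro k hk
      have := F.2 hk
      simpa [s] using this
    have hsupne : (F : ℕ →₀ K).support.Nonempty := Finsupp.support_nonempty_iff.2 hne'
    have hpos : 0 < n := lt_of_le_of_lt (Nat.zero_le _) (hsupp _ hsupne.choose_spec)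
    have hdeg : skewDeg (F : ℕ →₀ K) < n := by
      rw [skewDeg, Finset.sup_lt_iff hpos]
      intro k hk; exact hsupp k hk
    have hvan : ∀ b ∈ Set.range B, skewEval σ (F : ℕ →₀ K) b = 0 := by
      rintro b ⟨i, rfl⟩
      have := congrFun hF i
      rw [hL F i] at this
      simpa using this
    have h1 : skewDeg FB ≤ skewDeg (F : ℕ →₀ K) := hFB.2.2.2 _ hne' hvan
    have h2 : n ≤ skewDeg FB := by
      rw [← hn]
      refine hFΩ.2.2.2 FB hFB.1 ?_
      intro b hb
      have : b ∈ {a | skewEval σ FB a = 0} := hBgen ▸ hb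
      exact this
    omega
  -- finite dimensionality and ranks
  haveI : FiniteDimensional K ↥(Finsupp.supported K K s) :=
    LinearEquiv.finiteDimensional (Finsupp.supportedEquivFinsupp s).symm
  have hrank : Module.finrank K ↥(Finsupp.supported K K s)
      = Module.finrank K (Fin n → K) := by
    rw [(Finsupp.supportedEquivFinsupp s).finrank_eq]
    simp [Module.finrank_finsupp_self, Module.finrank_fin_fun, s]
  exact ⟨LinearMap.linearEquivOfInjective (V := ↥(Finsupp.supported K K s)) (V₂ := Fin n → K) L hinj hrank, fun F i => hL F i⟩
end

section
/- Lifting preserves distances: for c, d ∈ F_{q^m}^n (partitioned into ℓ blocks), the sum-subspace distance between their liftings equals twice their sum-rank distance: d_SS(I_Σ(c), I_Σ(d)) = 2·d_SR(c,d). Consequently, for any block code C ⊆ F_{q^m}^n, d_SS(I_Σ(C)) = 2·d_SR(C). -/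
open Matrix Module

variable {Fq Fqm : Type*} [Field Fq] [Field Fqm] [Algebra Fq Fqm]

/-- Matrix representation of a vector over `Fqm` with respect to an `Fq`-basis of `Fqm`. -/
noncomputable def matRep {m n : ℕ} (A : Basis (Fin m) Fq Fqm) (c : Fin n → Fqm) :
    Matrix (Fin m) (Fin n) Fq :=
  Matrix.of fun i j => A.repr (c j) i

/-- Sum-rank weight of a block vector `c = (c⁽¹⁾, …, c⁽ℓ⁾)` with block lengths `nn i`. -/
noncomputable def sumRankWt {m ℓ : ℕ} (A : Basis (Fin m) Fq Fqm) {nn : Fin ℓ → ℕ}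
    (c : (i : Fin ℓ) → Fin (nn i) → Fqm) : ℕ :=
  ∑ i, (matRep A (c i)).rank


/-- The `i`-th component of the lifting `I_Σ(c)`: the column space (over `Fq`) of the
`(m + nᵢ) × nᵢ` matrix obtained by stacking the matrix expansion of the `i`-th block of
`c` on top of the `nᵢ × nᵢ` identity matrix. -/
noncomputable def lifting {m ℓ : ℕ} (A : Basis (Fin m) Fq Fqm) {nn : Fin ℓ → ℕ}
    (c : (i : Fin ℓ) → Fin (nn i) → Fqm) (i : Fin ℓ) :
    Submodule Fq ((Fin m ⊕ Fin (nn i)) → Fq) :=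
  Submodule.span Fq (Set.range fun j : Fin (nn i) => fun r =>
    Matrix.fromRows (matRep A (c i)) (1 : Matrix (Fin (nn i)) (Fin (nn i)) Fq) r j)

lemma span_cols_eq_range {α β : Type*} [Fintype β] (M : Matrix α β Fq) :
    Submodule.span Fq (Set.range fun j : β => fun r => M r j) =
      LinearMap.range M.mulVecLin := by
  rw [Matrix.range_mulVecLin]
  rfl

lemma inj_fromRowsOne {m n : ℕ} (N : Matrix (Fin m) (Fin n) Fq) :
    Function.Injective (Matrix.fromRows N (1 : Matrix (Fin n) (Fin n) Fq)).mulVecLin := by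
  rw [← LinearMap.ker_eq_bot]
  ext x
  simp only [LinearMap.mem_ker, Matrix.mulVecLin_apply, Matrix.fromRows_mulVec,
    Submodule.mem_bot]
  constructor
  · intro h
    have := congrArg (fun f => f ∘ Sum.inr) h
    simpa [Matrix.one_mulVec, funext_iff] using this
  · rintro rfl; simp

noncomputable def extZero (m n : ℕ) : (Fin m → Fq) →ₗ[Fq] (Fin m ⊕ Fin n → Fq) :=
  (LinearEquiv.sumArrowLequivProdArrow (Fin m) (Fin n) Fq Fq).symm.toLinearMap ∘ₗ
    LinearMap.inl Fq (Fin m → Fq) (Fin n → Fq)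

lemma extZero_inj {m n : ℕ} : Function.Injective (extZero (Fq := Fq) m n) := by
  intro a b h
  have := congrArg (LinearEquiv.sumArrowLequivProdArrow (Fin m) (Fin n) Fq Fq) h
  simp [extZero] at this
  exact this

lemma extZero_apply {m n : ℕ} (v : Fin m → Fq) :
    extZero m n v = Sum.elim v 0 := by
  funext r
  cases r <;> simp [extZero, LinearEquiv.sumArrowLequivProdArrow]

lemma key {m n : ℕ} (M N : Matrix (Fin m) (Fin n) Fq) :
    finrank Fq ↥(LinearMap.range (Matrix.fromRows M (1 : Matrix (Fin n) (Fin n) Fq)).mulVecLin ⊔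
        LinearMap.range (Matrix.fromRows N (1 : Matrix (Fin n) (Fin n) Fq)).mulVecLin) =
      n + (M - N).rank ∧
    finrank Fq ↥(LinearMap.range (Matrix.fromRows M (1 : Matrix (Fin n) (Fin n) Fq)).mulVecLin ⊓
        LinearMap.range (Matrix.fromRows N (1 : Matrix (Fin n) (Fin n) Fq)).mulVecLin) =
      n - (M - N).rank := by
  set U := LinearMap.range (Matrix.fromRows M (1 : Matrix (Fin n) (Fin n) Fq)).mulVecLin with hU
  set V := LinearMap.range (Matrix.fromRows N (1 : Matrix (Fin n) (Fin n) Fq)).mulVecLin with hV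
  set W := LinearMap.range
    (Matrix.fromRows (M - N) (0 : Matrix (Fin n) (Fin n) Fq)).mulVecLin with hW
  have hWι : (Matrix.fromRows (M - N) (0 : Matrix (Fin n) (Fin n) Fq)).mulVecLin =
      extZero m n ∘ₗ (M - N).mulVecLin := by
    refine LinearMap.ext fun x => funext fun r => ?_
    cases r <;> simp [Matrix.fromRows_mulVec, extZero_apply, Matrix.sub_mulVec]
  have hfinW : finrank Fq ↥W = (M - N).rank := by
    rw [hW, hWι, LinearMap.range_comp]
    rw [Matrix.rank]
    exact ((LinearMap.range (M - N).mulVecLin).equivMapOfInjective _ extZero_inj).symm.finrank_eq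
  have hfinV : finrank Fq ↥V = n := by
    rw [hV, LinearMap.finrank_range_of_inj (inj_fromRowsOne N), Module.finrank_fin_fun]
  have hfinU : finrank Fq ↥U = n := by
    rw [hU, LinearMap.finrank_range_of_inj (inj_fromRowsOne M), Module.finrank_fin_fun]
  have hsup : U ⊔ V = W ⊔ V := by
    apply le_antisymm
    · apply sup_le _ le_sup_right
      rintro _ ⟨x, rfl⟩
      have : (Matrix.fromRows M (1 : Matrix (Fin n) (Fin n) Fq)).mulVecLin x =
          (Matrix.fromRows (M - N) (0 : Matrix (Fin n) (Fin n) Fq)).mulVecLin x +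
          (Matrix.fromRows N (1 : Matrix (Fin n) (Fin n) Fq)).mulVecLin x := by
        funext r
        cases r <;> simp [Matrix.fromRows_mulVec, Matrix.sub_mulVec]
      rw [this]
      exact Submodule.add_mem_sup (LinearMap.mem_range_self _ x) (LinearMap.mem_range_self _ x)
    · apply sup_le _ le_sup_right
      rintro _ ⟨x, rfl⟩
      have : (Matrix.fromRows (M - N) (0 : Matrix (Fin n) (Fin n) Fq)).mulVecLin x =
          (Matrix.fromRows M (1 : Matrix (Fin n) (Fin n) Fq)).mulVecLin x -
          (Matrix.fromRows N (1 : Matrix (Fin n) (Fin n) Fq)).mulVecLin x := by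
        funext r
        cases r <;> simp [Matrix.fromRows_mulVec, Matrix.sub_mulVec]
      rw [this]
      exact Submodule.sub_mem_sup (LinearMap.mem_range_self _ x) (LinearMap.mem_range_self _ x)
  have hdisj : W ⊓ V = ⊥ := by
    rw [eq_bot_iff]
    rintro v ⟨⟨x, hx⟩, ⟨y, hy⟩⟩
    have hy0 : y = 0 := by
      funext j
      have h1 := congrArg (fun f => f (Sum.inr j)) hx
      have h2 := congrArg (fun f => f (Sum.inr j)) hy
      simp [Matrix.fromRows_mulVec, Matrix.one_mulVec] at h1 h2
      exact h2.trans h1.symm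
    subst hy0
    simp only [map_zero] at hy
    simp [← hy]
  have hsupfin : finrank Fq ↥(U ⊔ V) = n + (M - N).rank := by
    have := Submodule.finrank_sup_add_finrank_inf_eq W V
    rw [hdisj, finrank_bot] at this
    rw [hsup]
    omega
  refine ⟨hsupfin, ?_⟩
  have := Submodule.finrank_sup_add_finrank_inf_eq U V
  have hrle : (M - N).rank ≤ n := Matrix.rank_le_width _
  omega

lemma sInf_two_mul (s : Set ℕ) : sInf ((fun w => 2 * w) '' s) = 2 * sInf s := by
  rcases s.eq_empty_or_nonempty with h | h
  · simp [h, Nat.sInf_empty]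
  · apply le_antisymm
    · exact Nat.sInf_le ⟨sInf s, Nat.sInf_mem h, rfl⟩
    · refine le_csInf (h.image _) ?_
      rintro _ ⟨a, ha, rfl⟩
      exact Nat.mul_le_mul_left 2 (Nat.sInf_le ha)

/-- Lifting preserves distances: the sum-subspace distance between the liftings of `c`
and `d` equals twice their sum-rank distance; consequently, for any block code `C`,
the minimum sum-subspace distance of the lifted code equals twice the minimum sum-rank
distance of `C`. -/
theorem lifting_distance {m ℓ : ℕ} (A : Basis (Fin m) Fq Fqm) {nn : Fin ℓ → ℕ} :
    (∀ c d : (i : Fin ℓ) → Fin (nn i) → Fqm,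
      ∑ i, (Module.finrank Fq ↥(lifting A c i ⊔ lifting A d i) -
          Module.finrank Fq ↥(lifting A c i ⊓ lifting A d i)) =
        2 * sumRankWt A (c - d)) ∧
    (∀ C : Set ((i : Fin ℓ) → Fin (nn i) → Fqm),
      sInf {w | ∃ c ∈ C, ∃ d ∈ C, c ≠ d ∧
          (∑ i, (Module.finrank Fq ↥(lifting A c i ⊔ lifting A d i) -
            Module.finrank Fq ↥(lifting A c i ⊓ lifting A d i))) = w} =
        2 * sInf {w | ∃ c ∈ C, ∃ d ∈ C, c ≠ d ∧ sumRankWt A (c - d) = w}) := by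
  have hmatRep : ∀ (n : ℕ) (a b : Fin n → Fqm),
      matRep A a - matRep A b = matRep A (a - b) := by
    intro n a b
    ext i j
    simp [matRep, map_sub]
  have part1 : ∀ c d : (i : Fin ℓ) → Fin (nn i) → Fqm,
      ∑ i, (Module.finrank Fq ↥(lifting A c i ⊔ lifting A d i) -
          Module.finrank Fq ↥(lifting A c i ⊓ lifting A d i)) =
        2 * sumRankWt A (c - d) := by
    intro c d
    rw [sumRankWt, Finset.mul_sum]
    refine Finset.sum_congr rfl fun i _ => ?_
    have hc : lifting A c i =
        LinearMap.range (Matrix.fromRows (matRep A (c i))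
          (1 : Matrix (Fin (nn i)) (Fin (nn i)) Fq)).mulVecLin := by
      unfold lifting; exact span_cols_eq_range _
    have hd : lifting A d i =
        LinearMap.range (Matrix.fromRows (matRep A (d i))
          (1 : Matrix (Fin (nn i)) (Fin (nn i)) Fq)).mulVecLin := by
      unfold lifting; exact span_cols_eq_range _
    rw [hc, hd]
    obtain ⟨h1, h2⟩ := key (matRep A (c i)) (matRep A (d i))
    rw [h1, h2, hmatRep]
    have hrle : (matRep A (c i - d i)).rank ≤ nn i := Matrix.rank_le_width _
    have : (c - d) i = c i - d i := rfl
    rw [this]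
    omega
  refine ⟨part1, fun C => ?_⟩
  have hset : {w | ∃ c ∈ C, ∃ d ∈ C, c ≠ d ∧
        (∑ i, (Module.finrank Fq ↥(lifting A c i ⊔ lifting A d i) -
          Module.finrank Fq ↥(lifting A c i ⊓ lifting A d i))) = w} =
      (fun w => 2 * w) '' {w | ∃ c ∈ C, ∃ d ∈ C, c ≠ d ∧ sumRankWt A (c - d) = w} := by
    ext w
    constructor
    · rintro ⟨c, hc, d, hd, hne, rfl⟩
      exact ⟨sumRankWt A (c - d), ⟨c, hc, d, hd, hne, rfl⟩, (part1 c d).symm⟩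
    · rintro ⟨a, ⟨c, hc, d, hd, hne, rfl⟩, rfl⟩
      exact ⟨c, hc, d, hd, hne, part1 c d⟩
  rw [hset, sInf_two_mul]
end
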